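/- Let a ∈ ℝ and b ∈ (0, 1/(2π)) be such that f_{a,b} has a parabolic cycle on 𝕋 (there exist w ∈ 𝕋 and n ≥ 1 with f_{a,b}^∘n(w) = w and (f_{a,b}^∘n)'(w) = 1), and let r > 1. Then the set {k ∈ ℕ : f_{a,b}^∘k is r-good} is finite, and the set {k ∈ ℕ : there exists an r-good analytic homeomorphism h of 𝕋 with f_{a,b}^∘k(h(w)) = w for all w ∈ 𝕋} is finite. -/

import Mathlib

open Filter Topology

/-- The complexified Arnold map `f_{a,b}(w) = e^{2πia} w e^{πb(w − 1/w)}` on `ℂ*`. -/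
noncomputable def fab (a b : ℝ) : ℂ → ℂ :=
  fun w => Complex.exp (2 * Real.pi * a * Complex.I) * w *
    Complex.exp (Real.pi * b * (w - w⁻¹))

/-- An analytic homeomorphism of the unit circle `𝕋` is `r`-good (for `r > 1`) if
it extends holomorphically to the annulus `{1/r < |w| < r}`, mapping this annulus
into the annulus `{1/2 < |w| < 2}`, and restricts to a bijection of `𝕋`. -/
def RGoodCircle (r : ℝ) (g : ℂ → ℂ) : Prop :=
  DifferentiableOn ℂ g {w : ℂ | 1 / r < ‖w‖ ∧ ‖w‖ < r} ∧
  Set.MapsTo g {w : ℂ | 1 / r < ‖w‖ ∧ ‖w‖ < r}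
    {w : ℂ | 1 / 2 < ‖w‖ ∧ ‖w‖ < 2} ∧
  Set.BijOn g (Metric.sphere (0 : ℂ) 1) (Metric.sphere (0 : ℂ) 1)


namespace ArnoldAux

lemma fab_ne_zero {a b : ℝ} {w : ℂ} (hw : w ≠ 0) : fab a b w ≠ 0 := by
  unfold fab
  exact mul_ne_zero (mul_ne_zero (Complex.exp_ne_zero _) hw) (Complex.exp_ne_zero _)

lemma iterate_ne_zero {a b : ℝ} (k : ℕ) {w : ℂ} (hw : w ≠ 0) : (fab a b)^[k] w ≠ 0 := by
  induction k generalizing w with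
  | zero => simpa
  | succ k ih =>
    rw [Function.iterate_succ_apply]
    exact ih (fab_ne_zero hw)

lemma hasDerivAt_fab (a b : ℝ) {w : ℂ} (hw : w ≠ 0) :
    HasDerivAt (fab a b)
      (Complex.exp (2 * Real.pi * a * Complex.I) *
        Complex.exp (Real.pi * b * (w - w⁻¹)) * (1 + Real.pi * b * (w + w⁻¹))) w := by
  have h1 : HasDerivAt (fun w : ℂ => (Real.pi : ℂ) * b * (w - w⁻¹))
      ((Real.pi : ℂ) * b * (1 + (w ^ 2)⁻¹)) w := by
    have := ((hasDerivAt_id w).fun_sub (hasDerivAt_inv hw)).const_mul ((Real.pi : ℂ) * b)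
    exact this.congr_deriv (by ring)
  have h2 := h1.cexp
  have h3 := ((hasDerivAt_id w).const_mul
      (Complex.exp (2 * Real.pi * a * Complex.I))).fun_mul h2
  simp only [id_eq] at h3
  refine h3.congr_deriv ?_
  field_simp

lemma deriv_fab (a b : ℝ) {w : ℂ} (hw : w ≠ 0) :
    deriv (fab a b) w = Complex.exp (2 * Real.pi * a * Complex.I) *
        Complex.exp (Real.pi * b * (w - w⁻¹)) * (1 + Real.pi * b * (w + w⁻¹)) :=
  (hasDerivAt_fab a b hw).deriv

lemma differentiableAt_fab (a b : ℝ) {w : ℂ} (hw : w ≠ 0) :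
    DifferentiableAt ℂ (fab a b) w := (hasDerivAt_fab a b hw).differentiableAt

lemma differentiableAt_iterate (a b : ℝ) (k : ℕ) {w : ℂ} (hw : w ≠ 0) :
    DifferentiableAt ℂ ((fab a b)^[k]) w := by
  induction k generalizing w with
  | zero => simpa using differentiableAt_fun_id
  | succ k ih =>
    rw [Function.iterate_succ]
    exact DifferentiableAt.comp w (ih (fab_ne_zero hw)) (differentiableAt_fab a b hw)

lemma analyticAt_iterate (a b : ℝ) (k : ℕ) {w : ℂ} (hw : w ≠ 0) :
    AnalyticAt ℂ ((fab a b)^[k]) w := by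
  have hop : IsOpen {z : ℂ | z ≠ 0} := isOpen_compl_singleton
  have : DifferentiableOn ℂ ((fab a b)^[k]) {z : ℂ | z ≠ 0} := fun z hz =>
    (differentiableAt_iterate a b k hz).differentiableWithinAt
  exact (this.analyticOnNhd hop) w hw

end ArnoldAux

namespace ArnoldAux2

lemma inv_eq_conj {w : ℂ} (hw : ‖w‖ = 1) : w⁻¹ = (starRingEnd ℂ) w := by
  rw [Complex.inv_def, Complex.normSq_eq_norm_sq, hw]
  simp

lemma abs_fab {a b : ℝ} {w : ℂ} (hw : ‖w‖ = 1) : ‖fab a b w‖ = 1 := by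
  unfold fab
  rw [norm_mul, norm_mul, hw, Complex.norm_exp, Complex.norm_exp]
  have h1 : (2 * (Real.pi:ℂ) * a * Complex.I).re = 0 := by simp
  have h2 : ((Real.pi:ℂ) * b * (w - w⁻¹)).re = 0 := by
    have hcast : (Real.pi:ℂ) * b = ((Real.pi * b : ℝ) : ℂ) := by push_cast; ring
    rw [inv_eq_conj hw, hcast, Complex.re_ofReal_mul, Complex.sub_re, Complex.conj_re]
    ring
  rw [h1, h2]
  simp

lemma abs_iterate {a b : ℝ} (k : ℕ) {w : ℂ} (hw : ‖w‖ = 1) :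
    ‖(fab a b)^[k] w‖ = 1 := by
  induction k generalizing w with
  | zero => simpa
  | succ k ih => rw [Function.iterate_succ_apply]; exact ih (abs_fab hw)

lemma ne_zero_of_abs_one {w : ℂ} (hw : ‖w‖ = 1) : w ≠ 0 := by
  intro h; rw [h] at hw; simp at hw

lemma deriv_fab_ne_zero {a b : ℝ} (hb : b ∈ Set.Ioo (0:ℝ) (1/(2*Real.pi))) {w : ℂ}
    (hw : ‖w‖ = 1) : deriv (fab a b) w ≠ 0 := by
  have hw0 := ne_zero_of_abs_one hw
  rw [ArnoldAux.deriv_fab a b hw0]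
  refine mul_ne_zero (mul_ne_zero (Complex.exp_ne_zero _) (Complex.exp_ne_zero _)) ?_
  have hre : (1 + (Real.pi:ℂ) * b * (w + w⁻¹)).re = 1 + Real.pi * b * (2 * w.re) := by
    have hcast : (Real.pi:ℂ) * b = ((Real.pi * b : ℝ) : ℂ) := by push_cast; ring
    rw [inv_eq_conj hw, hcast, Complex.add_re, Complex.one_re, Complex.re_ofReal_mul,
      Complex.add_re, Complex.conj_re]
    ring
  intro h
  have h1 : (1 + (Real.pi:ℂ) * b * (w + w⁻¹)).re = 0 := by rw [h, Complex.zero_re]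
  rw [hre] at h1
  have hrle : |w.re| ≤ 1 := by rw [← hw]; exact Complex.abs_re_le_norm w
  have hpi := Real.pi_pos
  have hb2 : Real.pi * b < 1/2 := by
    have h3 : Real.pi * b < Real.pi * (1/(2*Real.pi)) := mul_lt_mul_of_pos_left hb.2 hpi
    have h4 : Real.pi * (1/(2*Real.pi)) = 1/2 := by field_simp
    linarith
  have hb0 : 0 < Real.pi * b := mul_pos hpi hb.1
  rcases abs_le.mp hrle with ⟨hl, hu⟩
  nlinarith

lemma deriv_iterate_ne_zero {a b : ℝ} (hb : b ∈ Set.Ioo (0:ℝ) (1/(2*Real.pi))) (k : ℕ) {w : ℂ}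
    (hw : ‖w‖ = 1) : deriv ((fab a b)^[k]) w ≠ 0 := by
  induction k generalizing w with
  | zero => simp
  | succ k ih =>
    have hw0 := ne_zero_of_abs_one hw
    rw [Function.iterate_succ]
    rw [deriv_comp w (ArnoldAux.differentiableAt_iterate a b k (ArnoldAux.fab_ne_zero hw0))
      (ArnoldAux.differentiableAt_fab a b hw0)]
    exact mul_ne_zero (ih (abs_fab hw)) (deriv_fab_ne_zero hb hw)

end ArnoldAux2

namespace ArnoldAux3
open ArnoldAux ArnoldAux2

lemma exists_deriv_zero {a b : ℝ} (hb : b ∈ Set.Ioo (0:ℝ) (1/(2*Real.pi))) :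
    ∃ z : ℂ, z ≠ 0 ∧ deriv (fab a b) z = 0 := by
  have hpi := Real.pi_pos
  set d : ℝ := Real.pi * b with hd
  have hd0 : 0 < d := mul_pos hpi hb.1
  have hd2 : d < 1/2 := by
    have h3 : Real.pi * b < Real.pi * (1/(2*Real.pi)) := mul_lt_mul_of_pos_left hb.2 hpi
    have h4 : Real.pi * (1/(2*Real.pi)) = 1/2 := by field_simp
    linarith
  set e : ℝ := 1/d with he
  have he2 : 2 < e := by
    rw [he]
    rw [lt_div_iff₀ hd0]
    linarith
  have hdisc : (0:ℝ) ≤ e^2 - 4 := by nlinarith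
  set s : ℝ := Real.sqrt (e^2 - 4) with hs
  have hs2 : s^2 = e^2 - 4 := Real.sq_sqrt hdisc
  have hslt : s < e := by
    have : s < Real.sqrt (e^2) := by
      apply Real.sqrt_lt_sqrt hdisc
      linarith
    rwa [Real.sqrt_sq (by linarith)] at this
  set t : ℝ := (-e + s)/2 with ht
  have ht0 : t < 0 := by
    rw [ht]
    have hs0 : 0 ≤ s := Real.sqrt_nonneg _
    nlinarith
  have hkey : d * t^2 + t + d = 0 := by
    have : t^2 + e*t + 1 = 0 := by
      rw [ht]; nlinarith
    have h5 : d * (t^2 + e*t + 1) = 0 := by rw [this]; ring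
    have h6 : d * e = 1 := by rw [he]; field_simp
    nlinarith [h5, h6]
  refine ⟨(t:ℂ), by exact_mod_cast ne_of_lt ht0, ?_⟩
  have htne : (t:ℂ) ≠ 0 := by exact_mod_cast ne_of_lt ht0
  rw [ArnoldAux.deriv_fab a b htne]
  have hzero : 1 + (Real.pi:ℂ) * b * ((t:ℂ) + (t:ℂ)⁻¹) = 0 := by
    have hC : ((d:ℝ):ℂ) * (t:ℂ)^2 + (t:ℂ) + ((d:ℝ):ℂ) = 0 := by
      exact_mod_cast congrArg (fun x : ℝ => (x:ℂ)) hkey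
    have hdc : ((d:ℝ):ℂ) = (Real.pi:ℂ) * b := by rw [hd]; push_cast; ring
    rw [hdc] at hC
    field_simp
    linear_combination hC
  rw [hzero, mul_zero]

lemma not_eventually_id {a b : ℝ} (hb : b ∈ Set.Ioo (0:ℝ) (1/(2*Real.pi))) {n : ℕ}
    (hn : 1 ≤ n) {z : ℂ} (hz : z ≠ 0) :
    ¬ (∀ᶠ w in 𝓝 z, (fab a b)^[n] w = w) := by
  intro hev
  obtain ⟨z0, hz00, hz0d⟩ := exists_deriv_zero hb
  -- deriv of the iterate at z0 is 0
  have hdz0 : deriv ((fab a b)^[n]) z0 = 0 := by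
    obtain ⟨n', rfl⟩ : ∃ n', n = n' + 1 := ⟨n - 1, by omega⟩
    rw [Function.iterate_succ]
    rw [deriv_comp z0 (ArnoldAux.differentiableAt_iterate a b n' (ArnoldAux.fab_ne_zero hz00))
      (ArnoldAux.differentiableAt_fab a b hz00)]
    rw [hz0d, mul_zero]
  -- identity theorem: fab^[n] = id on ℂ*
  have hA : AnalyticOnNhd ℂ (fun w => (fab a b)^[n] w - w) {(0:ℂ)}ᶜ := by
    have hop : IsOpen {(0:ℂ)}ᶜ := isOpen_compl_singleton
    apply DifferentiableOn.analyticOnNhd _ hop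
    intro w hw
    exact ((ArnoldAux.differentiableAt_iterate a b n hw).sub differentiableAt_fun_id).differentiableWithinAt
  have hpc : IsPreconnected ({(0:ℂ)}ᶜ : Set ℂ) := by
    have : 1 < Module.rank ℝ ℂ := by
      rw [Complex.rank_real_complex]
      norm_num
    exact (isConnected_compl_singleton_of_one_lt_rank this 0).isPreconnected
  have heq : Set.EqOn (fun w => (fab a b)^[n] w - w) 0 {(0:ℂ)}ᶜ := by
    apply hA.eqOn_zero_of_preconnected_of_eventuallyEq_zero hpc (z₀ := z) hz
    filter_upwards [hev] with w hw
    simp [hw]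
  have hid : ∀ᶠ w in 𝓝 z0, (fab a b)^[n] w = w := by
    have hmem : {(0:ℂ)}ᶜ ∈ 𝓝 z0 := isOpen_compl_singleton.mem_nhds hz00
    filter_upwards [hmem] with w hw
    have := heq hw
    simpa [sub_eq_zero] using this
  have : deriv ((fab a b)^[n]) z0 = 1 := by
    have h2 : deriv ((fab a b)^[n]) z0 = deriv (fun w : ℂ => w) z0 :=
      Filter.EventuallyEq.deriv_eq hid
    rw [h2, deriv_id'']
  rw [hdz0] at this
  exact zero_ne_one this

end ArnoldAux3

namespace ArnoldAux4
open ArnoldAux ArnoldAux2 ArnoldAux3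

/-- Factorization of an analytic function minus its value at a point. -/
lemma sub_factor {ψ : ℂ → ℂ} {x : ℂ} (hψ : AnalyticAt ℂ ψ x) :
    ∃ η : ℂ → ℂ, AnalyticAt ℂ η x ∧ η x = deriv ψ x ∧
      ∀ᶠ w in 𝓝 x, ψ w = ψ x + (w - x) * η w := by
  have hg : AnalyticAt ℂ (fun w => ψ w - ψ x) x := hψ.sub analyticAt_const
  by_cases htop : analyticOrderAt (fun w => ψ w - ψ x) x = ⊤
  · rw [analyticOrderAt_eq_top] at htop
    refine ⟨fun _ => 0, analyticAt_const, ?_, ?_⟩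
    · have : deriv ψ x = deriv (fun _ : ℂ => ψ x) x := by
        apply Filter.EventuallyEq.deriv_eq
        filter_upwards [htop] with w hw
        exact sub_eq_zero.mp hw
      rw [this, deriv_const]
    · filter_upwards [htop] with w hw
      rw [sub_eq_zero.mp hw]; ring
  · obtain ⟨m, hm⟩ := WithTop.ne_top_iff_exists.mp htop
    obtain ⟨G, hG, hG0, hGev⟩ := (hg.analyticOrderAt_eq_natCast (n := m)).mp hm.symm
    have hm0 : m ≠ 0 := by
      intro h0
      rw [h0] at hGev
      have := hGev.self_of_nhds
      simp only [sub_self, pow_zero, one_smul, smul_eq_mul] at this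
      apply hG0
      have h3 : (0:ℂ) = G x := by rw [this]; ring
      exact h3.symm
    obtain ⟨m', rfl⟩ : ∃ m', m = m' + 1 := ⟨m - 1, by omega⟩
    refine ⟨fun w => (w - x)^m' * G w,
      ((analyticAt_id.sub analyticAt_const).pow m').mul hG, ?_, ?_⟩
    · have hdψ : deriv ψ x = deriv (fun w => ψ x + (w - x)^(m'+1) * G w) x := by
        apply Filter.EventuallyEq.deriv_eq
        filter_upwards [hGev] with w hw
        have h2 : ψ w - ψ x = (w - x)^(m'+1) * G w := by simpa [smul_eq_mul] using hw
        rw [sub_eq_iff_eq_add'] at h2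
        exact h2
      have h1 : HasDerivAt (fun w : ℂ => (w - x)^(m'+1)) (((m':ℂ)+1) * (x - x)^m') x := by
        have := ((hasDerivAt_id x).sub_const x).fun_pow (m'+1)
        simpa using this
      have hder : HasDerivAt (fun w => ψ x + (w - x)^(m'+1) * G w)
          ((((m':ℂ)+1) * (x - x)^m') * G x + (x - x)^(m'+1) * deriv G x) x := by
        have := (hasDerivAt_const x (ψ x)).fun_add (h1.fun_mul hG.differentiableAt.hasDerivAt)
        simpa using this
      rw [hdψ, hder.deriv]
      rcases Nat.eq_zero_or_pos m' with h | h
      · subst h; simp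
      · simp [sub_self, zero_pow h.ne']
    · filter_upwards [hGev] with w hw
      have h2 : ψ w - ψ x = (w - x)^(m'+1) * G w := by simpa [smul_eq_mul] using hw
      rw [sub_eq_iff_eq_add'] at h2
      rw [h2, pow_succ']
      ring

/-- Local form at a parabolic fixed point of the iterate `fab^[n]`. -/
lemma local_data {a b : ℝ} (hb : b ∈ Set.Ioo (0:ℝ) (1/(2*Real.pi))) {n : ℕ} (hn : 1 ≤ n)
    {z : ℂ} (hz : ‖z‖ = 1)
    (hfix : (fab a b)^[n] z = z) (hder : deriv ((fab a b)^[n]) z = 1) :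
    ∃ m : ℕ, 2 ≤ m ∧ ∃ u : ℂ → ℂ, AnalyticAt ℂ u z ∧ u z ≠ 0 ∧
      ∀ᶠ w in 𝓝 z, (fab a b)^[n] w = w + (w - z)^m * u w := by
  have hz0 := ne_zero_of_abs_one hz
  have hFan : AnalyticAt ℂ ((fab a b)^[n]) z := analyticAt_iterate a b n hz0
  have hg : AnalyticAt ℂ (fun w => (fab a b)^[n] w - w) z := hFan.sub analyticAt_id
  have htop : analyticOrderAt (fun w => (fab a b)^[n] w - w) z ≠ ⊤ := by
    intro h
    rw [analyticOrderAt_eq_top] at h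
    apply not_eventually_id hb hn hz0
    filter_upwards [h] with w hw
    exact sub_eq_zero.mp hw
  obtain ⟨m, hm⟩ := WithTop.ne_top_iff_exists.mp htop
  obtain ⟨u, hu, hu0, huev⟩ := (hg.analyticOrderAt_eq_natCast (n := m)).mp hm.symm
  have hself := huev.self_of_nhds
  refine ⟨m, ?_, u, hu, hu0, ?_⟩
  · -- m ≥ 2
    by_contra hlt
    push_neg at hlt
    interval_cases m
    · simp only [pow_zero, one_smul, smul_eq_mul] at hself
      rw [hfix, sub_self] at hself
      apply hu0
      have h3 : (0:ℂ) = u z := by rw [hself]; ring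
      exact h3.symm
    · -- m = 1 : deriv of g at z is u z but also 0
      have hd0 : deriv (fun w => (fab a b)^[n] w - w) z = 0 := by
        rw [deriv_fun_sub hFan.differentiableAt differentiableAt_fun_id, hder, deriv_id'']
        ring
      have hdu : deriv (fun w => (fab a b)^[n] w - w) z = u z := by
        have heq : deriv (fun w => (fab a b)^[n] w - w) z
            = deriv (fun w => (w - z)^1 * u w) z := by
          apply Filter.EventuallyEq.deriv_eq
          filter_upwards [huev] with w hw
          simpa [smul_eq_mul] using hw
        have hder2 : HasDerivAt (fun w => (w - z)^1 * u w)
            (1 * u z + (z - z)^1 * deriv u z) z := by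
          have h1 : HasDerivAt (fun w : ℂ => (w - z)^1) 1 z := by
            simpa using ((hasDerivAt_id z).sub_const z).fun_pow 1
          simpa using h1.fun_mul hu.differentiableAt.hasDerivAt
        rw [heq, hder2.deriv]
        ring_nf
      rw [hd0] at hdu
      exact hu0 hdu.symm
  · filter_upwards [huev] with w hw
    have h2 : (fab a b)^[n] w - w = (w - z)^m * u w := by simpa [smul_eq_mul] using hw
    rw [sub_eq_iff_eq_add'] at h2
    rw [h2]

end ArnoldAux4

namespace ArnoldAux5
open ArnoldAux ArnoldAux2 ArnoldAux3 ArnoldAux4 Metric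

/-- Expansion of iterates at a parabolic fixed point: the leading coefficient grows linearly. -/
lemma iterate_expansion {F : ℂ → ℂ} {z : ℂ} {m : ℕ} (hm : 2 ≤ m) {u : ℂ → ℂ}
    (hF : AnalyticAt ℂ F z) (hFz : F z = z)
    (hu : AnalyticAt ℂ u z) (hev : ∀ᶠ w in 𝓝 z, F w = w + (w - z)^m * u w) :
    ∀ q : ℕ, ∃ v : ℂ → ℂ, AnalyticAt ℂ v z ∧ v z = q * u z ∧
      ∀ᶠ w in 𝓝 z, F^[q] w = w + (w - z)^m * v w := by
  intro q
  induction q with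
  | zero =>
    exact ⟨fun _ => 0, analyticAt_const, by simp, by
      filter_upwards with w; simp⟩
  | succ q ih =>
    obtain ⟨v, hv, hvz, hvev⟩ := ih
    refine ⟨fun w => u w + (1 + (w - z)^(m-1) * u w)^m * v (F w), ?_, ?_, ?_⟩
    · exact hu.add ((((analyticAt_const.add (((analyticAt_id.sub analyticAt_const).pow
        (m-1)).mul hu)).pow m)).mul (hv.comp_of_eq hF hFz))
    · show u z + (1 + (z - z)^(m-1) * u z)^m * v (F z) = ((q+1 : ℕ):ℂ) * u z
      rw [hFz, hvz, sub_self, zero_pow (by omega : m - 1 ≠ 0)]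
      push_cast
      ring
    · have hcont : Filter.Tendsto F (𝓝 z) (𝓝 z) := by
        have := hF.continuousAt.tendsto
        rwa [hFz] at this
      filter_upwards [hev, hcont.eventually hvev] with w hw1 hw2
      have hfac : w + (w - z)^m * u w - z = (w - z) * (1 + (w - z)^(m-1) * u w) := by
        have hp : (w - z)^m = (w - z) * (w - z)^(m-1) := by
          rw [← pow_succ']
          congr 1
          omega
        rw [hp]; ring
      rw [Function.iterate_succ_apply, hw2, hw1, hfac, mul_pow]
      ring

/-- Cauchy-type bound for the leading coefficient of a factored bounded function. -/
lemma coeff_bound {G v : ℂ → ℂ} {p : ℂ} {ρ M : ℝ} {m : ℕ} (hρ : 0 < ρ)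
    (hG : DifferentiableOn ℂ G (ball p ρ))
    (hM : ∀ w ∈ ball p ρ, ‖G w‖ ≤ M)
    (hv : AnalyticAt ℂ v p)
    (hev : ∀ᶠ w in 𝓝 p, G w = (w - p)^m * v w) :
    ‖v p‖ ≤ M / (ρ/2)^m := by
  set V : ℂ → ℂ := fun w => if w = p then v p else G w / (w - p)^m with hV
  have hVv : V =ᶠ[𝓝 p] v := by
    filter_upwards [hev] with w hw
    by_cases hwp : w = p
    · simp [hV, hwp]
    · simp only [hV, if_neg hwp]
      rw [hw]
      field_simp [sub_ne_zero.mpr hwp]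
  have hVd : DifferentiableOn ℂ V (ball p ρ) := by
    intro w hw
    by_cases hwp : w = p
    · subst hwp
      exact (hv.differentiableAt.congr_of_eventuallyEq hVv).differentiableWithinAt
    · have hopen : IsOpen (ball p ρ \ {p}) := isOpen_ball.sdiff isClosed_singleton
      have hx : w ∈ ball p ρ \ {p} := ⟨hw, hwp⟩
      have : DifferentiableAt ℂ V w := by
        have hdiff : DifferentiableAt ℂ (fun w => G w / (w - p)^m) w := by
          refine DifferentiableAt.div ?_ ?_ (pow_ne_zero _ (sub_ne_zero.mpr hwp))
          · exact (hG.differentiableAt (isOpen_ball.mem_nhds hw))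
          · exact ((differentiableAt_fun_id.sub (differentiableAt_const p)).pow m)
        apply hdiff.congr_of_eventuallyEq
        filter_upwards [hopen.mem_nhds hx] with y hy
        have hy2 : y ≠ p := fun h => hy.2 (by simp [h])
        simp [hV, if_neg hy2]
      exact this.differentiableWithinAt
  have hM0 : 0 ≤ M := le_trans (norm_nonneg _) (hM p (mem_ball_self hρ))
  have hbd : ∀ w ∈ sphere p (ρ/2), ‖V w‖ ≤ M / (ρ/2)^m := by
    intro w hw
    have hwp : w ≠ p := by
      intro h
      rw [h] at hw
      simp [mem_sphere] at hw
      linarith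
    have hwball : w ∈ ball p ρ := by
      rw [mem_ball]
      rw [mem_sphere] at hw
      rw [hw]; linarith
    simp only [hV, if_neg hwp]
    rw [norm_div, norm_pow]
    have habs : ‖w - p‖ = ρ/2 := by
      rw [← Complex.dist_eq]
      exact hw
    rw [habs]
    apply div_le_div_of_nonneg_right (hM w hwball) (by positivity) |>.trans_eq rfl
  -- maximum principle
  have hmax : ‖V p‖ ≤ M / (ρ/2)^m := by
    have hU : Bornology.IsBounded (ball p (ρ/2)) := isBounded_ball
    have hsub : closure (ball p (ρ/2)) ⊆ ball p ρ := by
      rw [closure_ball p (by positivity : (ρ/2 : ℝ) ≠ 0)]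
      intro w hw
      rw [mem_closedBall] at hw
      rw [mem_ball]
      linarith
    have hdc : DiffContOnCl ℂ V (ball p (ρ/2)) :=
      ⟨hVd.mono (ball_subset_ball (by linarith)), (hVd.continuousOn).mono hsub⟩
    have hfr : ∀ w ∈ frontier (ball p (ρ/2)), ‖V w‖ ≤ M / (ρ/2)^m := by
      rw [frontier_ball p (by positivity : (ρ/2:ℝ) ≠ 0)]
      exact hbd
    have := Complex.norm_le_of_forall_mem_frontier_norm_le hU hdc hfr
      (subset_closure (mem_ball_self (by positivity)))
    exact this
  calc ‖v p‖ = ‖V p‖ := by rw [hVv.self_of_nhds]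
    _ ≤ M / (ρ/2)^m := hmax

end ArnoldAux5

namespace ArnoldAux6
open ArnoldAux ArnoldAux2 ArnoldAux3 ArnoldAux4 ArnoldAux5 Metric Filter Topology

lemma freq_circle {p : ℂ} (hp : ‖p‖ = 1) :
    ∃ᶠ z in 𝓝[≠] p, ‖z‖ = 1 := by
  have hp0 : p ≠ 0 := ne_zero_of_abs_one hp
  set g : ℝ → ℂ := fun t => p * Complex.exp (t * Complex.I) with hg
  have hgc : Continuous g := by
    apply continuous_const.mul
    exact (Complex.continuous_ofReal.mul continuous_const).cexp
  have htend : Filter.Tendsto g (𝓝[>] (0:ℝ)) (𝓝[≠] p) := by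
    rw [tendsto_nhdsWithin_iff]
    constructor
    · have h0 : g 0 = p := by simp [hg]
      have := (hgc.tendsto 0).mono_left (nhdsWithin_le_nhds (s := Set.Ioi (0:ℝ)))
      rwa [h0] at this
    · filter_upwards [Ioo_mem_nhdsGT_of_mem (Set.mem_Ico.mpr ⟨le_refl (0:ℝ), one_pos⟩)]
        with t ht
      intro hmem
      have heq : g t = p := hmem
      have hexp : Complex.exp (t * Complex.I) = 1 := by
        have heq2 : p * Complex.exp (t * Complex.I) = p * 1 := by
          rw [mul_one]; exact heq
        exact mul_left_cancel₀ hp0 heq2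
      rw [Complex.exp_eq_one_iff] at hexp
      obtain ⟨k, hk⟩ := hexp
      have hIne : (Complex.I : ℂ) ≠ 0 := Complex.I_ne_zero
      have htk : (t : ℂ) = k * (2 * Real.pi) := by
        have h5 : (t:ℂ) * Complex.I = ((k:ℂ) * (2 * Real.pi)) * Complex.I := by
          rw [hk]; ring
        exact mul_right_cancel₀ hIne h5
      have htr : t = k * (2 * Real.pi) := by exact_mod_cast htk
      have hpi := Real.pi_pos
      have h2pi : (1:ℝ) < 2 * Real.pi := by nlinarith [Real.pi_gt_three]
      rcases le_or_gt (k:ℝ) 0 with hk0 | hk0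
      · nlinarith [ht.1, ht.2]
      · have hk0' : 0 < k := by exact_mod_cast hk0
        have hk1 : (1:ℝ) ≤ (k:ℝ) := by exact_mod_cast hk0'
        nlinarith [ht.1, ht.2]
  apply htend.frequently
  apply Filter.Eventually.frequently
  filter_upwards with t
  simp [hg, Complex.norm_exp, hp]

lemma exists_residue {S : Set ℕ} (hS : S.Infinite) {n : ℕ} (hn : 0 < n) :
    ∃ s, s < n ∧ {k | k ∈ S ∧ k % n = s}.Infinite := by
  by_contra hcon
  push_neg at hcon
  have hsub : S ⊆ ⋃ s ∈ Finset.range n, {k | k ∈ S ∧ k % n = s} := by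
    intro k hk
    simp only [Set.mem_iUnion]
    exact ⟨k % n, by simpa using Nat.mod_lt k hn, hk, rfl⟩
  have hfin : (⋃ s ∈ Finset.range n, {k | k ∈ S ∧ k % n = s}).Finite := by
    apply Set.Finite.biUnion (Finset.range n).finite_toSet
    intro s hs
    have hsn : s < n := by simpa using hs
    exact hcon s hsn
  exact hS (hfin.subset hsub)

end ArnoldAux6

namespace ArnoldAux7
open ArnoldAux ArnoldAux2 ArnoldAux3 ArnoldAux4 ArnoldAux5 ArnoldAux6 Metric Filter Topology

lemma real_ineqs {r : ℝ} (hr : 1 < r) :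
    0 < (1 - 1/r)/2 ∧ (1 - 1/r)/2 < 1/2 ∧ 1/r < 1 - (1 - 1/r)/2 ∧ 1 + (1 - 1/r)/2 < r := by
  have hr0 : (0:ℝ) < r := by linarith
  have hi : 0 < 1/r := by positivity
  have hi1 : 1/r < 1 := by rw [div_lt_one hr0]; exact hr
  have hir : (1/r)*r = 1 := by field_simp
  refine ⟨by linarith, by linarith, by linarith, ?_⟩
  nlinarith [mul_pos (sub_pos.mpr hr) (by linarith : (0:ℝ) < 2*r - 1), hir]

lemma ball_facts {r : ℝ} (hr : 1 < r) {p : ℂ} (hp : ‖p‖ = 1) :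
    (∀ w ∈ Metric.ball p ((1 - 1/r)/2), 1/r < ‖w‖ ∧ ‖w‖ < r) ∧
    (∀ w ∈ Metric.closedBall p ((1 - 1/r)/2), w ≠ 0) := by
  obtain ⟨h0, hhalf, hA, hB⟩ := real_ineqs hr
  set ρ := (1 - 1/r)/2 with hρ
  have key : ∀ w : ℂ, dist w p ≤ ρ → 1 - ρ ≤ ‖w‖ ∧ ‖w‖ ≤ 1 + ρ := by
    intro w hw
    rw [dist_eq_norm] at hw
    have h1 : ‖p‖ - ‖w‖ ≤ ‖p - w‖ := norm_sub_norm_le p w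
    have h2 : ‖w‖ - ‖p‖ ≤ ‖w - p‖ := norm_sub_norm_le w p
    rw [norm_sub_rev] at h1
    have hpn : ‖p‖ = 1 := by rw [hp]
    constructor
    · have := (by linarith : 1 - ρ ≤ ‖w‖)
      exact this
    · have := (by linarith : ‖w‖ ≤ 1 + ρ)
      exact this
  constructor
  · intro w hw
    have := key w (le_of_lt (mem_ball.mp hw))
    exact ⟨by linarith [this.1], by linarith [this.2]⟩
  · intro w hw
    have := key w (mem_closedBall.mp hw)
    intro h0'
    rw [h0'] at this
    simp at this
    linarith [this.1]

lemma orbit_data {a b : ℝ} (hb : b ∈ Set.Ioo (0:ℝ) (1/(2*Real.pi))) {n : ℕ}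
    {p : ℂ} (hp : ‖p‖ = 1) (hfix : (fab a b)^[n] p = p)
    (hder : deriv ((fab a b)^[n]) p = 1) (s : ℕ) :
    ‖(fab a b)^[s] p‖ = 1 ∧
    (fab a b)^[n] ((fab a b)^[s] p) = (fab a b)^[s] p ∧
    deriv ((fab a b)^[n]) ((fab a b)^[s] p) = 1 := by
  set f := fab a b with hf
  have hp0 : p ≠ 0 := ne_zero_of_abs_one hp
  have hy : ‖f^[s] p‖ = 1 := abs_iterate s hp
  have hy0 : f^[s] p ≠ 0 := ne_zero_of_abs_one hy
  have hfixy : f^[n] (f^[s] p) = f^[s] p := by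
    have h1 : f^[n + s] p = f^[n] (f^[s] p) := Function.iterate_add_apply f n s p
    have h2 : f^[s + n] p = f^[s] (f^[n] p) := Function.iterate_add_apply f s n p
    rw [hfix] at h2
    rw [← h1, add_comm, h2]
  refine ⟨hy, hfixy, ?_⟩
  have hA : deriv (f^[s]) p ≠ 0 := deriv_iterate_ne_zero hb s hp
  have d1 : deriv (f^[n + s]) p = deriv (f^[n]) (f^[s] p) * deriv (f^[s]) p := by
    rw [Function.iterate_add]
    exact deriv_comp p (differentiableAt_iterate a b n hy0) (differentiableAt_iterate a b s hp0)
  have d2 : deriv (f^[s + n]) p = deriv (f^[s]) (f^[n] p) * deriv (f^[n]) p := by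
    rw [Function.iterate_add]
    exact deriv_comp p (differentiableAt_iterate a b s (by rw [hfix]; exact hp0))
      (differentiableAt_iterate a b n hp0)
  rw [hfix, hder, mul_one] at d2
  rw [add_comm] at d1
  rw [d2] at d1
  have d3 : deriv (f^[n]) (f^[s] p) * deriv (f^[s]) p = 1 * deriv (f^[s]) p := by
    rw [one_mul]; exact d1.symm
  exact mul_right_cancel₀ hA d3

lemma deriv_of_expansion {F : ℂ → ℂ} {z : ℂ} {m : ℕ} (hm : 2 ≤ m) {v : ℂ → ℂ}
    (hv : AnalyticAt ℂ v z) (hev : ∀ᶠ w in 𝓝 z, F w = w + (w - z)^m * v w) :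
    deriv F z = 1 := by
  have heq : deriv F z = deriv (fun w => w + (w - z)^m * v w) z :=
    Filter.EventuallyEq.deriv_eq hev
  have h1 : HasDerivAt (fun w : ℂ => (w - z)^m) ((m:ℂ) * (z - z)^(m-1)) z := by
    have := ((hasDerivAt_id z).sub_const z).fun_pow m
    simpa using this
  have hder : HasDerivAt (fun w => w + (w - z)^m * v w)
      (1 + ((m:ℂ) * (z - z)^(m-1) * v z + (z - z)^m * deriv v z)) z := by
    have := (hasDerivAt_id z).fun_add (h1.fun_mul hv.differentiableAt.hasDerivAt)
    simpa using this
  rw [heq, hder.deriv, sub_self, zero_pow (by omega : m - 1 ≠ 0), zero_pow (by omega : m ≠ 0)]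
  ring

end ArnoldAux7

namespace ArnoldAux8
open ArnoldAux ArnoldAux2 ArnoldAux3 ArnoldAux4 ArnoldAux5 ArnoldAux6 ArnoldAux7
open Metric Filter Topology

lemma part1 {a b : ℝ} (hb : b ∈ Set.Ioo (0:ℝ) (1/(2*Real.pi))) {n : ℕ} (hn : 1 ≤ n)
    {p : ℂ} (hp : ‖p‖ = 1) (hfix : (fab a b)^[n] p = p)
    (hder : deriv ((fab a b)^[n]) p = 1) {r : ℝ} (hr : 1 < r) :
    {k : ℕ | RGoodCircle r ((fab a b)^[k])}.Finite := by
  rw [← Set.not_infinite]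
  intro hS
  have hn0 : 0 < n := hn
  obtain ⟨s, hsn, hSs⟩ := exists_residue hS hn0
  obtain ⟨h0ρ, hρhalf, _, _⟩ := real_ineqs hr
  set ρ := (1 - 1/r)/2 with hρdef
  obtain ⟨hballr, hcb0⟩ := ball_facts hr hp
  have hball0 : ∀ w ∈ ball p ρ, w ≠ 0 := fun w hw => hcb0 w (ball_subset_closedBall hw)
  obtain ⟨hy1, hyfix, hyder⟩ := orbit_data hb hp hfix hder s
  set y := (fab a b)^[s] p with hydef
  have hy0 : y ≠ 0 := ne_zero_of_abs_one hy1
  obtain ⟨m, hm2, u, hu, hu0, huev⟩ := local_data hb hn hy1 hyfix hyder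
  have hp0 : p ≠ 0 := ne_zero_of_abs_one hp
  obtain ⟨η, hη, hηp, hηev⟩ := sub_factor (analyticAt_iterate a b s hp0)
  have hA : deriv ((fab a b)^[s]) p ≠ 0 := deriv_iterate_ne_zero hb s hp
  have hconts : ContinuousOn ((fab a b)^[s]) (closedBall p ρ) := fun w hw =>
    (differentiableAt_iterate a b s (hcb0 w hw)).continuousAt.continuousWithinAt
  obtain ⟨Ms, hMs⟩ := (isCompact_closedBall p ρ).exists_bound_of_continuousOn hconts
  set ε := ‖deriv ((fab a b)^[s]) p‖ ^ m * ‖u y‖ with hεdef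
  have hε0 : 0 < ε := mul_pos (pow_pos (norm_pos_iff.mpr hA) m)
    (norm_pos_iff.mpr hu0)
  set B := (2 + Ms) / (ρ/2)^m with hBdef
  have key : ∀ k, RGoodCircle r ((fab a b)^[k]) → k % n = s → ((k / n : ℕ) : ℝ) * ε ≤ B := by
    intro k hkg hks
    set q := k / n with hq
    obtain ⟨v, hv, hvy, hvev⟩ :=
      iterate_expansion hm2 (analyticAt_iterate a b n hy0) hyfix hu huev q
    have hks' : n * q + s = k := by rw [hq, ← hks]; exact Nat.div_add_mod k n
    have hiter : ∀ w, (fab a b)^[k] w = ((fab a b)^[n])^[q] ((fab a b)^[s] w) := by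
      intro w
      conv_lhs => rw [← hks']
      rw [Function.iterate_add_apply, Function.iterate_mul]
    have hcontp : Filter.Tendsto ((fab a b)^[s]) (𝓝 p) (𝓝 y) := by
      have := (differentiableAt_iterate a b s hp0).continuousAt.tendsto
      rwa [← hydef] at this
    have hev2 : ∀ᶠ w in 𝓝 p, ((fab a b)^[n])^[q] ((fab a b)^[s] w) =
        (fab a b)^[s] w + ((fab a b)^[s] w - y)^m * v ((fab a b)^[s] w) :=
      hcontp.eventually hvev
    set V : ℂ → ℂ := fun w => η w ^ m * v ((fab a b)^[s] w) with hVdef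
    have hVan : AnalyticAt ℂ V p :=
      (hη.pow m).mul (hv.comp_of_eq (analyticAt_iterate a b s hp0) hydef.symm)
    have hev3 : ∀ᶠ w in 𝓝 p, (fab a b)^[k] w - (fab a b)^[s] w = (w - p)^m * V w := by
      filter_upwards [hev2, hηev] with w h2 h3
      rw [hiter w, h2]
      have h4 : (fab a b)^[s] w - y = (w - p) * η w := by
        rw [h3, ← hydef]; ring
      rw [h4, mul_pow, hVdef]
      ring
    have hdiff : DifferentiableOn ℂ (fun w => (fab a b)^[k] w - (fab a b)^[s] w) (ball p ρ) := by
      intro w hw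
      exact ((differentiableAt_iterate a b k (hball0 w hw)).sub
        (differentiableAt_iterate a b s (hball0 w hw))).differentiableWithinAt
    have hbd : ∀ w ∈ ball p ρ, ‖(fab a b)^[k] w - (fab a b)^[s] w‖ ≤ 2 + Ms := by
      intro w hw
      have h5 : ‖(fab a b)^[k] w‖ ≤ 2 := le_of_lt (hkg.2.1 (hballr w hw)).2
      have h6 : ‖(fab a b)^[s] w‖ ≤ Ms := by
        have := hMs w (ball_subset_closedBall hw)
        exact this
      calc ‖(fab a b)^[k] w - (fab a b)^[s] w‖
          ≤ ‖(fab a b)^[k] w‖ + ‖(fab a b)^[s] w‖ :=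
            norm_sub_le _ _
        _ ≤ 2 + Ms := by linarith
    have hcb := coeff_bound h0ρ hdiff hbd hVan hev3
    have hVp : ‖V p‖ = (q : ℝ) * ε := by
      have hVpval : V p = (deriv ((fab a b)^[s]) p)^m * ((q:ℂ) * u y) := by
        rw [hVdef]
        simp only []
        rw [hηp, ← hydef, hvy]
      rw [hVpval, norm_mul, norm_pow, norm_mul, Complex.norm_natCast, hεdef]
      ring
    rw [hVp] at hcb
    exact hcb
  -- choose a large k in the residue class
  set N := Nat.ceil (B / ε) + 1 with hN
  obtain ⟨k, hkT, hklt⟩ := hSs.exists_gt (n * N)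
  obtain ⟨hkS, hks⟩ := hkT
  have hqN : N ≤ k / n := by
    rw [Nat.le_div_iff_mul_le hn0, Nat.mul_comm]
    exact le_of_lt hklt
  have hkey := key k hkS hks
  have hNc : (B / ε) < (N:ℝ) := by
    rw [hN]
    push_cast
    have := Nat.le_ceil (B / ε)
    linarith
  have hqc : ((N:ℕ):ℝ) ≤ ((k/n : ℕ):ℝ) := by exact_mod_cast hqN
  have : B < ((k/n : ℕ):ℝ) * ε := by
    calc B = (B/ε) * ε := by field_simp
    _ < (N:ℝ) * ε := by exact mul_lt_mul_of_pos_right hNc hε0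
    _ ≤ ((k/n : ℕ):ℝ) * ε := mul_le_mul_of_nonneg_right hqc (le_of_lt hε0)
  linarith

end ArnoldAux8

namespace ArnoldAux9
open ArnoldAux ArnoldAux2 ArnoldAux3 ArnoldAux4 ArnoldAux5 ArnoldAux6 ArnoldAux7
open Metric Filter Topology

lemma mem_sphere_iff_abs {w : ℂ} : w ∈ Metric.sphere (0:ℂ) 1 ↔ ‖w‖ = 1 := by
  rw [Metric.mem_sphere, Complex.dist_eq, sub_zero]

lemma part2 {a b : ℝ} (hb : b ∈ Set.Ioo (0:ℝ) (1/(2*Real.pi))) {n : ℕ} (hn : 1 ≤ n)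
    {p : ℂ} (hp : ‖p‖ = 1) (hfix : (fab a b)^[n] p = p)
    (hder : deriv ((fab a b)^[n]) p = 1) {r : ℝ} (hr : 1 < r) :
    {k : ℕ | ∃ h : ℂ → ℂ, RGoodCircle r h ∧
      ∀ w ∈ Metric.sphere (0 : ℂ) 1, (fab a b)^[k] (h w) = w}.Finite := by
  rw [← Set.not_infinite]
  intro hS
  have hn0 : 0 < n := hn
  obtain ⟨s, hsn, hSs⟩ := exists_residue hS hn0
  obtain ⟨h0ρ, hρhalf, hin1, hin2⟩ := real_ineqs hr
  set ρ := (1 - 1/r)/2 with hρdef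
  obtain ⟨hballr, hcb0⟩ := ball_facts hr hp
  have hball0 : ∀ w ∈ ball p ρ, w ≠ 0 := fun w hw => hcb0 w (ball_subset_closedBall hw)
  have hp0 : p ≠ 0 := ne_zero_of_abs_one hp
  obtain ⟨m, hm2, u, hu, hu0, huev⟩ := local_data hb hn hp hfix hder
  -- bound for f^[s] on the closed annulus K
  set K : Set ℂ := {z : ℂ | 1/2 ≤ ‖z‖ ∧ ‖z‖ ≤ 2} with hKdef
  have hK0 : ∀ z ∈ K, z ≠ 0 := by
    intro z hz h0
    rw [h0] at hz
    have h9 := hz.1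
    rw [norm_zero] at h9
    linarith
  have hKcomp : IsCompact K := by
    have hcl : IsClosed K := by
      have : K = (fun z : ℂ => ‖z‖) ⁻¹' (Set.Icc (1/2) 2) := rfl
      rw [this]
      exact isClosed_Icc.preimage continuous_norm
    apply Metric.isCompact_of_isClosed_isBounded hcl
    apply Bornology.IsBounded.subset (Metric.isBounded_closedBall (x := (0:ℂ)) (r := 2))
    intro z hz
    rw [mem_closedBall, Complex.dist_eq, sub_zero]
    exact hz.2
  have hKcont : ContinuousOn ((fab a b)^[s]) K := fun z hz =>
    (differentiableAt_iterate a b s (hK0 z hz)).continuousAt.continuousWithinAt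
  obtain ⟨Ms, hMs⟩ := hKcomp.exists_bound_of_continuousOn hKcont
  set ε := ‖u p‖ with hεdef
  have hε0 : 0 < ε := norm_pos_iff.mpr hu0
  set B := (2 + Ms) / (ρ/2)^m with hBdef
  have hopenAr : IsOpen {w : ℂ | 1 / r < ‖w‖ ∧ ‖w‖ < r} := by
    have hAr : {w : ℂ | 1 / r < ‖w‖ ∧ ‖w‖ < r}
        = (fun z : ℂ => ‖z‖) ⁻¹' (Set.Ioo (1/r) r) := rfl
    rw [hAr]
    exact isOpen_Ioo.preimage continuous_norm
  have key : ∀ k (h : ℂ → ℂ), RGoodCircle r h →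
      (∀ w ∈ Metric.sphere (0:ℂ) 1, (fab a b)^[k] (h w) = w) → k % n = s →
      ((k / n : ℕ) : ℝ) * ε ≤ B := by
    intro k h hg hinv hks
    set q := k / n with hq
    have hks' : n * q + s = k := by rw [hq, ← hks]; exact Nat.div_add_mod k n
    obtain ⟨hdiffh, hmaps, hbij⟩ := hg
    have hsubAr : ball p ρ ⊆ {w : ℂ | 1 / r < ‖w‖ ∧ ‖w‖ < r} :=
      fun w hw => hballr w hw
    have hdAt : ∀ w ∈ ball p ρ, DifferentiableAt ℂ h w := fun w hw =>
      hdiffh.differentiableAt (hopenAr.mem_nhds (hsubAr hw))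
    have hhK : ∀ w ∈ ball p ρ, h w ∈ K := by
      intro w hw
      have := hmaps (hsubAr hw)
      exact ⟨le_of_lt this.1, le_of_lt this.2⟩
    have hh0 : ∀ w ∈ ball p ρ, h w ≠ 0 := fun w hw => hK0 _ (hhK w hw)
    -- identity extension to a neighbourhood of p
    have hphi : ∀ᶠ w in 𝓝 p, (fab a b)^[k] (h w) = w := by
      have hAn : AnalyticOnNhd ℂ (fun w => (fab a b)^[k] (h w) - w) (ball p ρ) := by
        apply DifferentiableOn.analyticOnNhd _ isOpen_ball
        intro w hw
        exact (((differentiableAt_iterate a b k (hh0 w hw)).comp w (hdAt w hw)).sub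
          differentiableAt_fun_id).differentiableWithinAt
      have hfreq : ∃ᶠ z in 𝓝[≠] p, (fab a b)^[k] (h z) - z = 0 := by
        apply (freq_circle hp).mono
        intro z hz
        rw [hinv z (mem_sphere_iff_abs.mpr hz)]
        ring
      have heq := hAn.eqOn_zero_of_preconnected_of_frequently_eq_zero
        (convex_ball p ρ).isPreconnected (mem_ball_self h0ρ) hfreq
      filter_upwards [isOpen_ball.mem_nhds (mem_ball_self h0ρ)] with w hw
      have := heq hw
      simpa [sub_eq_zero] using this
    have hps : p ∈ Metric.sphere (0:ℂ) 1 := mem_sphere_iff_abs.mpr hp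
    have hzs : h p ∈ Metric.sphere (0:ℂ) 1 := hbij.1 hps
    have hz1 : ‖h p‖ = 1 := mem_sphere_iff_abs.mp hzs
    have hz0 : h p ≠ 0 := ne_zero_of_abs_one hz1
    have hfkz : (fab a b)^[k] (h p) = p := hphi.self_of_nhds
    -- injectivity of f^[k] on the sphere
    have hinj : ∀ z1 ∈ Metric.sphere (0:ℂ) 1, ∀ z2 ∈ Metric.sphere (0:ℂ) 1,
        (fab a b)^[k] z1 = (fab a b)^[k] z2 → z1 = z2 := by
      intro z1 hz1' z2 hz2' heq12
      obtain ⟨w1, hw1, hw1e⟩ := hbij.2.2 hz1'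
      obtain ⟨w2, hw2, hw2e⟩ := hbij.2.2 hz2'
      have e1 : (fab a b)^[k] z1 = w1 := by rw [← hw1e]; exact hinv w1 hw1
      have e2 : (fab a b)^[k] z2 = w2 := by rw [← hw2e]; exact hinv w2 hw2
      rw [e1, e2] at heq12
      rw [← hw1e, ← hw2e, heq12]
    -- F fixes h p
    have hFsph : (fab a b)^[n] (h p) ∈ Metric.sphere (0:ℂ) 1 :=
      mem_sphere_iff_abs.mpr (abs_iterate n hz1)
    have hFz : (fab a b)^[n] (h p) = h p := by
      apply hinj _ hFsph _ hzs
      have c1 : (fab a b)^[k] ((fab a b)^[n] (h p)) = (fab a b)^[n] ((fab a b)^[k] (h p)) := by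
        rw [← Function.iterate_add_apply, ← Function.iterate_add_apply, add_comm]
      rw [c1, hfkz, hfix]
    -- f^[s] (h p) = p
    have hyp : (fab a b)^[s] (h p) = p := by
      have hFy : (fab a b)^[n] ((fab a b)^[s] (h p)) = (fab a b)^[s] (h p) := by
        calc (fab a b)^[n] ((fab a b)^[s] (h p)) = (fab a b)^[n+s] (h p) :=
              (Function.iterate_add_apply _ n s _).symm
        _ = (fab a b)^[s+n] (h p) := by rw [add_comm]
        _ = (fab a b)^[s] ((fab a b)^[n] (h p)) := Function.iterate_add_apply _ s n _
        _ = (fab a b)^[s] (h p) := by rw [hFz]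
      have hFqy : ((fab a b)^[n])^[q] ((fab a b)^[s] (h p)) = (fab a b)^[s] (h p) :=
        Function.iterate_fixed hFy q
      have h7 : ((fab a b)^[n])^[q] ((fab a b)^[s] (h p)) = p := by
        rw [← Function.iterate_mul, ← Function.iterate_add_apply, hks']
        exact hfkz
      rw [← hFqy, h7]
    -- H := f^[s] ∘ h
    set H : ℂ → ℂ := fun w => (fab a b)^[s] (h w) with hHdef
    have hHdiff : DifferentiableOn ℂ H (ball p ρ) := fun w hw =>
      ((differentiableAt_iterate a b s (hh0 w hw)).comp w (hdAt w hw)).differentiableWithinAt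
    have hHan : AnalyticAt ℂ H p := hHdiff.analyticAt (isOpen_ball.mem_nhds (mem_ball_self h0ρ))
    have hHp : H p = p := hyp
    obtain ⟨v, hv, hvp, hvev⟩ :=
      iterate_expansion hm2 (analyticAt_iterate a b n hp0) hfix hu huev q
    have hFqH : ∀ᶠ w in 𝓝 p, ((fab a b)^[n])^[q] (H w) = w := by
      filter_upwards [hphi] with w hw
      have h8 : ((fab a b)^[n])^[q] (H w) = (fab a b)^[k] (h w) := by
        show ((fab a b)^[n])^[q] ((fab a b)^[s] (h w)) = (fab a b)^[k] (h w)
        rw [← Function.iterate_mul, ← Function.iterate_add_apply, hks']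
      rw [h8, hw]
    have hHcont : Filter.Tendsto H (𝓝 p) (𝓝 p) := by
      have := hHan.continuousAt.tendsto
      rwa [hHp] at this
    have hcomb : ∀ᶠ w in 𝓝 p, H w + (H w - p)^m * v (H w) = w := by
      filter_upwards [hFqH, hHcont.eventually hvev] with w h1 h2
      rw [← h2]
      exact h1
    obtain ⟨η, hη, hηp, hηev⟩ := sub_factor hHan
    -- deriv H p = 1
    have hFqdiff : DifferentiableAt ℂ (((fab a b)^[n])^[q]) p := by
      rw [← Function.iterate_mul]
      exact differentiableAt_iterate a b (n*q) hp0
    have hFq_deriv : deriv (((fab a b)^[n])^[q]) p = 1 := deriv_of_expansion hm2 hv hvev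
    have hHder : deriv H p = 1 := by
      have hdcomp : deriv (fun w => ((fab a b)^[n])^[q] (H w)) p = deriv (fun w : ℂ => w) p :=
        Filter.EventuallyEq.deriv_eq hFqH
      rw [deriv_id''] at hdcomp
      have hchain : deriv (fun w => ((fab a b)^[n])^[q] (H w)) p
          = deriv (((fab a b)^[n])^[q]) (H p) * deriv H p := by
        exact deriv_comp p (by rw [hHp]; exact hFqdiff) hHan.differentiableAt
      rw [hchain, hHp, hFq_deriv, one_mul] at hdcomp
      exact hdcomp
    -- the factored function
    set V : ℂ → ℂ := fun w => -(η w ^ m * v (H w)) with hVdef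
    have hVan : AnalyticAt ℂ V p := ((hη.pow m).mul (hv.comp_of_eq hHan hHp)).neg
    have hev3 : ∀ᶠ w in 𝓝 p, H w - w = (w - p)^m * V w := by
      filter_upwards [hcomb, hηev] with w h1 h2
      have h4 : H w - p = (w - p) * η w := by rw [h2, hHp]; ring
      have h5 : H w - w = -((H w - p)^m * v (H w)) := by linear_combination h1
      rw [h5, h4, mul_pow, hVdef]
      ring
    have hdiffG : DifferentiableOn ℂ (fun w => H w - w) (ball p ρ) := fun w hw =>
      ((hHdiff w hw).sub differentiableAt_fun_id.differentiableWithinAt)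
    have hbd : ∀ w ∈ ball p ρ, ‖H w - w‖ ≤ 2 + Ms := by
      intro w hw
      have h5 : ‖H w‖ ≤ Ms := by
        have := hMs (h w) (hhK w hw)
        exact this
      have h6 : ‖w‖ ≤ 2 := by
        have hd : dist w p < ρ := mem_ball.mp hw
        rw [Complex.dist_eq] at hd
        have h7 : ‖w‖ ≤ ‖w - p‖ + ‖p‖ := by
          have := norm_add_le (w - p) p
          simpa using this
        rw [hp] at h7
        linarith
      calc ‖H w - w‖ ≤ ‖H w‖ + ‖w‖ :=
            norm_sub_le _ _
        _ ≤ 2 + Ms := by linarith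
    have hcb := coeff_bound h0ρ hdiffG hbd hVan hev3
    have hVp : ‖V p‖ = (q : ℝ) * ε := by
      have hVpval : V p = -((deriv H p) ^ m * ((q:ℂ) * u p)) := by
        rw [hVdef]
        simp only []
        rw [hηp, hHp, hvp]
      rw [hVpval, hHder, one_pow, one_mul, norm_neg, norm_mul, Complex.norm_natCast, hεdef]
    rw [hVp] at hcb
    exact hcb
  -- choose a large k in the residue class
  set N := Nat.ceil (B / ε) + 1 with hN
  obtain ⟨k, hkT, hklt⟩ := hSs.exists_gt (n * N)
  obtain ⟨hkS, hks⟩ := hkT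
  obtain ⟨h, hg, hinv⟩ := hkS
  have hqN : N ≤ k / n := by
    rw [Nat.le_div_iff_mul_le hn0, Nat.mul_comm]
    exact le_of_lt hklt
  have hkey := key k h hg hinv hks
  have hNc : (B / ε) < (N:ℝ) := by
    rw [hN]
    push_cast
    have := Nat.le_ceil (B / ε)
    linarith
  have hqc : ((N:ℕ):ℝ) ≤ ((k/n : ℕ):ℝ) := by exact_mod_cast hqN
  have hfin : B < ((k/n : ℕ):ℝ) * ε := by
    calc B = (B/ε) * ε := by field_simp
    _ < (N:ℝ) * ε := mul_lt_mul_of_pos_right hNc hε0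
    _ ≤ ((k/n : ℕ):ℝ) * ε := mul_le_mul_of_nonneg_right hqc (le_of_lt hε0)
  linarith

end ArnoldAux9

/-- If `f_{a,b}` has a parabolic cycle on `𝕋` and `r > 1`, then only finitely many
forward iterates `f_{a,b}^∘k` are `r`-good, and only finitely many `k` admit an
`r`-good inverse of `f_{a,b}^∘k` on `𝕋`. -/
theorem finitely_many_good_iterates (a b : ℝ)
    (hb : b ∈ Set.Ioo (0 : ℝ) (1 / (2 * Real.pi)))
    (hpar : ∃ (w : ℂ) (n : ℕ), w ∈ Metric.sphere (0 : ℂ) 1 ∧ 1 ≤ n ∧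
      (fab a b)^[n] w = w ∧ deriv ((fab a b)^[n]) w = 1)
    (r : ℝ) (hr : 1 < r) :
    {k : ℕ | RGoodCircle r ((fab a b)^[k])}.Finite ∧
    {k : ℕ | ∃ h : ℂ → ℂ, RGoodCircle r h ∧
      ∀ w ∈ Metric.sphere (0 : ℂ) 1, (fab a b)^[k] (h w) = w}.Finite := by
  obtain ⟨p, n, hpS, hn, hfix, hder⟩ := hpar
  have hp : ‖p‖ = 1 := ArnoldAux9.mem_sphere_iff_abs.mp hpS
  exact ⟨ArnoldAux8.part1 hb hn hp hfix hder hr, ArnoldAux9.part2 hb hn hp hfix hder hr⟩
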